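/- Let λ1 ≥ λ2 ≥ λ3 ≥ 0 > λ4 ≥ λ5 ≥ −λ1 be real numbers with λ1 + λ2 + λ4 + λ5 ≥ 0, λ2 + λ5 < 0 and λ3 + λ4 ≥ 0. Set g = √(−(λ2+λ5)(λ1+λ5)/2). Then the quantity under the square root is nonnegative, and the 5×5 matrix L4 with rows ((λ3+λ4)/2, 0, 0, 0, (λ3−λ4)/2), (0, 0, g, −λ5, 0), (0, g, λ1+λ2+λ5, g, 0), (0, −λ5, g, 0, 0), ((λ3−λ4)/2, 0, 0, 0, (λ3+λ4)/2) is nonnegative and bisymmetric, and its spectrum is λ1, λ2, λ3, λ4, λ5. -/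

import Mathlib

open Matrix Polynomial

/-- The 5×5 reverse identity (exchange) matrix. -/
def J5 : Matrix (Fin 5) (Fin 5) ℝ :=
  Matrix.of fun i j => if (i : ℕ) + (j : ℕ) = 4 then 1 else 0

lemma charpoly_aux (a b g l1 l2 l5 : ℝ) (hg : g * g * 2 = -((l2+l5)*(l1+l5))) :
    (!![a, 0, 0, 0, b;
        0, 0, g, -l5, 0;
        0, g, l1 + l2 + l5, g, 0;
        0, -l5, g, 0, 0;
        b, 0, 0, 0, a] : Matrix (Fin 5) (Fin 5) ℝ).charpoly
    = (X - C l1)*(X - C l2)*(X - C (a+b))*(X - C (a-b))*(X - C l5) := by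
  have hg' : (C g : ℝ[X]) * C g * 2 = -((C l2 + C l5)*(C l1 + C l5)) := by
    have := congrArg C hg
    push_cast at this
    simp only [map_mul, map_neg, map_add, map_ofNat] at this
    exact this
  rw [Matrix.charpoly]
  have hcm : charmatrix (!![a, 0,0,0,b; 0,0,g,-l5,0; 0,g,l1+l2+l5,g,0; 0,-l5,g,0,0; b,0,0,0,a] : Matrix (Fin 5) (Fin 5) ℝ)
      = !![X - C a, 0, 0, 0, -C b;
           0, X, -C g, C l5, 0;
           0, -C g, X - C (l1+l2+l5), -C g, 0;
           0, C l5, -C g, X, 0;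
           -C b, 0, 0, 0, X - C a] := by
    ext i j
    fin_cases i <;> fin_cases j <;>
      simp [charmatrix_apply, Matrix.one_apply, Matrix.vecHead, Matrix.vecTail]
  rw [hcm]
  rw [Matrix.det_succ_row_zero]
  simp [Fin.sum_univ_succ, Matrix.det_succ_row_zero, Matrix.det_fin_three,
    Fin.succAbove]
  linear_combination (((X - C a)^2 - (C b)^2) * (C l5 - X)) * hg'

theorem stmt_10 (l1 l2 l3 l4 l5 : ℝ)
    (h12 : l1 ≥ l2) (h23 : l2 ≥ l3) (h3 : l3 ≥ 0) (h4 : 0 > l4) (h45 : l4 ≥ l5)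
    (h5 : l5 ≥ -l1)
    (h1245 : l1 + l2 + l4 + l5 ≥ 0) (h25 : l2 + l5 < 0) (h34 : l3 + l4 ≥ 0) :
    0 ≤ -((l2 + l5) * (l1 + l5)) / 2 ∧
    let g : ℝ := Real.sqrt (-((l2 + l5) * (l1 + l5)) / 2)
    let L4 : Matrix (Fin 5) (Fin 5) ℝ :=
      !![(l3 + l4) / 2, 0, 0, 0, (l3 - l4) / 2;
         0, 0, g, -l5, 0;
         0, g, l1 + l2 + l5, g, 0;
         0, -l5, g, 0, 0;
         (l3 - l4) / 2, 0, 0, 0, (l3 + l4) / 2]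
    (∀ i j, 0 ≤ L4 i j) ∧ L4 = L4ᵀ ∧ L4 * J5 = J5 * L4 ∧
      L4.charpoly = (X - C l1) * (X - C l2) * (X - C l3) * (X - C l4) * (X - C l5) := by
  have h0 : 0 ≤ -((l2 + l5) * (l1 + l5)) / 2 := by
    have hm : (l2 + l5) * (l1 + l5) ≤ 0 :=
      mul_nonpos_of_nonpos_of_nonneg h25.le (by linarith)
    linarith
  refine ⟨h0, ?_⟩
  intro g L4
  have hg0 : 0 ≤ g := Real.sqrt_nonneg _
  have hg2 : g * g * 2 = -((l2 + l5) * (l1 + l5)) := by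
    have := Real.mul_self_sqrt h0
    rw [show g = Real.sqrt (-((l2 + l5) * (l1 + l5)) / 2) from rfl]
    linarith
  refine ⟨?_, ?_, ?_, ?_⟩
  · intro i j
    fin_cases i <;> fin_cases j <;>
      simp [L4, Matrix.vecHead, Matrix.vecTail, show ((4:Fin 5):ℕ)=4 from rfl, show ((3:Fin 5):ℕ)=3 from rfl, show ((2:Fin 5):ℕ)=2 from rfl, show ((1:Fin 5):ℕ)=1 from rfl] <;> linarith
  · ext i j
    fin_cases i <;> fin_cases j <;> simp [L4, Matrix.vecHead, Matrix.vecTail, show ((4:Fin 5):ℕ)=4 from rfl, show ((3:Fin 5):ℕ)=3 from rfl, show ((2:Fin 5):ℕ)=2 from rfl, show ((1:Fin 5):ℕ)=1 from rfl]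
  · ext i j
    fin_cases i <;> fin_cases j <;>
      simp [L4, J5, Matrix.mul_apply, Fin.sum_univ_five, Matrix.vecHead, Matrix.vecTail, show ((4:Fin 5):ℕ)=4 from rfl, show ((3:Fin 5):ℕ)=3 from rfl, show ((2:Fin 5):ℕ)=2 from rfl, show ((1:Fin 5):ℕ)=1 from rfl]
  · show (!![(l3 + l4) / 2, 0, 0, 0, (l3 - l4) / 2;
         0, 0, g, -l5, 0;
         0, g, l1 + l2 + l5, g, 0;
         0, -l5, g, 0, 0;
         (l3 - l4) / 2, 0, 0, 0, (l3 + l4) / 2] : Matrix (Fin 5) (Fin 5) ℝ).charpoly = _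
    rw [charpoly_aux _ _ _ _ _ _ hg2,
      show (l3 + l4) / 2 + (l3 - l4) / 2 = l3 by ring,
      show (l3 + l4) / 2 - (l3 - l4) / 2 = l4 by ring]
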